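/- arXiv:1510.03200 — 6 statements merged into one kernel-verified Lean document; each statement's English description precedes it below -/
import Mathlib

section
/- If a₀, a₁, ..., aₙ are positive reals with a₀ ≥ a₁ + a₂ + ... + aₙ, then ∫₀^∞ ∏ₖ₌₀ⁿ (sin(aₖx)/x) dx = (π/2)·a₁a₂⋯aₙ. -/
set_option maxHeartbeats 1000000

open Real Filter MeasureTheory intervalIntegral Finset Set

lemma hasDeriv_aux (t : ℝ) (x : ℝ) :
    HasDerivAt (fun x : ℝ => -(Real.exp (-(x*t)) * (Real.cos x + t * Real.sin x)) / (1+t^2))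
      (Real.sin x * Real.exp (-(x*t))) x := by
  have h1 : HasDerivAt (fun x : ℝ => Real.exp (-(x*t))) (-t * Real.exp (-(x*t))) x := by
    have := (Real.hasDerivAt_exp (-(x*t))).comp x (((hasDerivAt_id x).mul_const t).neg)
    simpa [mul_comm, Function.comp_def] using this
  have h2 : HasDerivAt (fun x : ℝ => Real.cos x + t * Real.sin x)
      (-Real.sin x + t * Real.cos x) x :=
    (Real.hasDerivAt_cos x).add ((Real.hasDerivAt_sin x).const_mul t)
  have h3 := ((h1.mul h2).neg).div_const (1+t^2)
  refine h3.congr_deriv ?_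
  have ht : 1 + t^2 ≠ 0 := by positivity
  rw [div_eq_iff ht]
  ring

lemma integral_sin_exp (t T : ℝ) :
    ∫ x in (0:ℝ)..T, Real.sin x * Real.exp (-(x*t))
      = (1 - Real.exp (-(T*t)) * (Real.cos T + t * Real.sin T)) / (1+t^2) := by
  rw [intervalIntegral.integral_eq_sub_of_hasDerivAt (fun x _ => hasDeriv_aux t x)
    (Continuous.intervalIntegrable (by fun_prop) 0 T)]
  simp [Real.cos_zero, Real.sin_zero]
  ring

lemma integral_exp_neg_mul {x : ℝ} (hx : 0 < x) :
    ∫ t in Ioi (0:ℝ), Real.exp (-(x*t)) = 1/x := by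
  have := integral_comp_mul_left_Ioi (fun u => Real.exp (-u)) 0 hx
  simp only [mul_zero] at this
  rw [this, integral_exp_neg_Ioi_zero, smul_eq_mul, mul_one, one_div]

lemma integrable_exp_neg_mul {x : ℝ} (hx : 0 < x) :
    IntegrableOn (fun t => Real.exp (-(x*t))) (Ioi (0:ℝ)) := by
  simpa [neg_mul] using exp_neg_integrableOn_Ioi 0 hx

lemma hint (T : ℝ) : Integrable (fun p : ℝ × ℝ => Real.sin p.1 * Real.exp (-(p.1*p.2)))
    ((volume.restrict (Ioc (0:ℝ) T)).prod (volume.restrict (Ioi (0:ℝ)))) := by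
  have hmeas : AEStronglyMeasurable (fun p : ℝ × ℝ => Real.sin p.1 * Real.exp (-(p.1*p.2)))
      ((volume.restrict (Ioc (0:ℝ) T)).prod (volume.restrict (Ioi (0:ℝ)))) :=
    (Continuous.aestronglyMeasurable
      ((Real.continuous_sin.comp continuous_fst).mul
        (Real.continuous_exp.comp (continuous_fst.mul continuous_snd).neg)))
  rw [MeasureTheory.integrable_prod_iff hmeas]
  constructor
  · filter_upwards [ae_restrict_mem measurableSet_Ioc] with x hx
    exact (integrable_exp_neg_mul hx.1).const_mul _
  · apply MeasureTheory.Integrable.mono' (integrable_const (1:ℝ)) (hmeas.norm.integral_prod_right')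
    filter_upwards [ae_restrict_mem measurableSet_Ioc] with x hx
    have : (∫ t in Ioi (0:ℝ), ‖Real.sin x * Real.exp (-(x*t))‖) = |Real.sin x| / x := by
      simp only [norm_mul, Real.norm_eq_abs, Real.abs_exp]
      rw [MeasureTheory.integral_const_mul, integral_exp_neg_mul hx.1]
      ring
    rw [Real.norm_eq_abs, this, abs_div, abs_abs, abs_of_pos hx.1, div_le_one hx.1]
    exact Real.abs_sin_le_abs.trans (le_of_eq (abs_of_pos hx.1))

lemma fub {T : ℝ} (hT : 0 ≤ T) :
    ∫ x in Ioc (0:ℝ) T, Real.sin x / x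
      = ∫ t in Ioi (0:ℝ),
          (1 - Real.exp (-(T*t)) * (Real.cos T + t * Real.sin T)) / (1+t^2) := by
  have step1 : ∫ x in Ioc (0:ℝ) T, Real.sin x / x
      = ∫ x in Ioc (0:ℝ) T, ∫ t in Ioi (0:ℝ), Real.sin x * Real.exp (-(x*t)) := by
    apply MeasureTheory.setIntegral_congr_fun measurableSet_Ioc
    intro x hx
    simp only []
    rw [MeasureTheory.integral_const_mul, integral_exp_neg_mul hx.1]
    ring
  rw [step1, MeasureTheory.integral_integral_swap (hint T)]
  apply MeasureTheory.integral_congr_ae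
  filter_upwards [] with t
  calc ∫ x in Ioc (0:ℝ) T, Real.sin x * Real.exp (-(x*t))
      = ∫ x in (0:ℝ)..T, Real.sin x * Real.exp (-(x*t)) := (intervalIntegral.integral_of_le hT).symm
    _ = _ := integral_sin_exp t T

lemma err_ptwise {T t : ℝ} (ht : 0 < t) :
    ‖Real.exp (-(T*t)) * (Real.cos T + t * Real.sin T) / (1+t^2)‖ ≤ 2 * Real.exp (-(T*t)) := by
  have h1 : |Real.cos T + t * Real.sin T| ≤ 1 + t := by
    calc |Real.cos T + t * Real.sin T| ≤ |Real.cos T| + |t * Real.sin T| := abs_add_le _ _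
      _ ≤ 1 + t := by
        gcongr
        · exact Real.abs_cos_le_one T
        · rw [abs_mul, abs_of_pos ht]
          calc t * |Real.sin T| ≤ t * 1 := by gcongr; exact Real.abs_sin_le_one T
            _ = t := mul_one t
  have h2 : 1 + t ≤ 2 * (1 + t^2) := by nlinarith
  have h3 : (0:ℝ) < 1 + t^2 := by positivity
  rw [Real.norm_eq_abs, abs_div, abs_mul, Real.abs_exp, abs_of_pos h3, div_le_iff₀ h3]
  calc Real.exp (-(T*t)) * |Real.cos T + t * Real.sin T|
      ≤ Real.exp (-(T*t)) * (2 * (1+t^2)) := by gcongr; exact h1.trans h2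
    _ = 2 * Real.exp (-(T*t)) * (1+t^2) := by ring

lemma err_int {T : ℝ} (hT : 0 < T) :
    IntegrableOn (fun t => Real.exp (-(T*t)) * (Real.cos T + t * Real.sin T) / (1+t^2))
      (Ioi (0:ℝ)) := by
  apply MeasureTheory.Integrable.mono' ((integrable_exp_neg_mul hT).const_mul 2)
  · apply Continuous.aestronglyMeasurable
    have h3 : ∀ t : ℝ, (1:ℝ) + t^2 ≠ 0 := fun t => by positivity
    fun_prop (disch := intros; positivity)
  · filter_upwards [ae_restrict_mem measurableSet_Ioi] with t ht
    exact err_ptwise ht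

lemma err_small :
    Tendsto (fun T : ℝ => ∫ t in Ioi (0:ℝ),
        Real.exp (-(T*t)) * (Real.cos T + t * Real.sin T) / (1+t^2)) atTop (nhds 0) := by
  have key : ∀ T : ℝ, 0 < T →
      ‖∫ t in Ioi (0:ℝ), Real.exp (-(T*t)) * (Real.cos T + t * Real.sin T) / (1+t^2)‖
        ≤ 2 / T := by
    intro T hT
    have := MeasureTheory.norm_integral_le_of_norm_le ((integrable_exp_neg_mul hT).const_mul 2)
      (by filter_upwards [ae_restrict_mem measurableSet_Ioi] with t ht; exact err_ptwise ht)
    calc ‖∫ t in Ioi (0:ℝ), Real.exp (-(T*t)) * (Real.cos T + t * Real.sin T) / (1+t^2)‖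
        ≤ ∫ t in Ioi (0:ℝ), 2 * Real.exp (-(T*t)) := this
      _ = 2 / T := by rw [MeasureTheory.integral_const_mul, integral_exp_neg_mul hT]; ring
  have h2T : Tendsto (fun T : ℝ => 2 / T) atTop (nhds 0) := Tendsto.const_div_atTop tendsto_id 2
  apply squeeze_zero_norm' _ h2T
  filter_upwards [eventually_gt_atTop 0] with T hT
  exact key T hT

lemma dirichlet_Ioc :
    Tendsto (fun T : ℝ => ∫ x in Ioc (0:ℝ) T, Real.sin x / x) atTop (nhds (π/2)) := by
  have heq : ∀ T : ℝ, 0 < T → (∫ x in Ioc (0:ℝ) T, Real.sin x / x)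
      = π/2 - ∫ t in Ioi (0:ℝ), Real.exp (-(T*t)) * (Real.cos T + t * Real.sin T) / (1+t^2) := by
    intro T hT
    rw [fub hT.le]
    have hsub : ∀ t : ℝ, (1 - Real.exp (-(T*t)) * (Real.cos T + t * Real.sin T)) / (1+t^2)
        = (1+t^2)⁻¹ - Real.exp (-(T*t)) * (Real.cos T + t * Real.sin T) / (1+t^2) := by
      intro t
      have h3 : (0:ℝ) < 1 + t^2 := by positivity
      field_simp
    simp_rw [hsub]
    rw [MeasureTheory.integral_sub (integrable_inv_one_add_sq.integrableOn) (err_int hT)]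
    congr 1
    simpa using (integral_Ioi_inv_one_add_sq (i := 0))
  have := (tendsto_const_nhds (x := π/2) (f := atTop (α := ℝ))).sub err_small
  rw [sub_zero] at this
  apply this.congr'
  filter_upwards [eventually_gt_atTop 0] with T hT
  exact (heq T hT).symm

lemma subst_eq {c : ℝ} (hc : 0 < c) {T : ℝ} (hT : 0 ≤ T) :
    ∫ x in Ioc (0:ℝ) T, Real.sin (c*x) / x = ∫ u in Ioc (0:ℝ) (c*T), Real.sin u / u := by
  have h1 : ∫ x in (0:ℝ)..T, Real.sin (c*x) / x
      = ∫ x in (0:ℝ)..T, c * ((fun u => Real.sin u / u) (c * x)) := by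
    apply intervalIntegral.integral_congr
    intro x _
    rcases eq_or_ne x 0 with rfl | hx
    · simp
    · field_simp
  have h2 := intervalIntegral.integral_comp_mul_left (fun u => Real.sin u / u) hc.ne'
    (a := 0) (b := T)
  rw [← intervalIntegral.integral_of_le hT, ← intervalIntegral.integral_of_le
    (by positivity : (0:ℝ) ≤ c*T), h1, intervalIntegral.integral_const_mul, h2]
  rw [smul_eq_mul, mul_zero, ← mul_assoc, mul_inv_cancel₀ hc.ne', one_mul]

lemma dirichlet_scaled {c : ℝ} (hc : 0 < c) :
    Tendsto (fun T : ℝ => ∫ x in Ioc (0:ℝ) T, Real.sin (c*x) / x) atTop (nhds (π/2)) := by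
  have hcomp : Tendsto (fun T : ℝ => c * T) atTop atTop :=
    Tendsto.const_mul_atTop hc tendsto_id
  apply (dirichlet_Ioc.comp hcomp).congr'
  filter_upwards [eventually_ge_atTop 0] with T hT
  exact (subst_eq hc hT).symm

lemma Si_bound : ∃ C : ℝ, 0 < C ∧ ∀ c T : ℝ, 0 ≤ c →
    |∫ x in Ioc (0:ℝ) T, Real.sin (c*x)/x| ≤ C := by
  obtain ⟨M, hM⟩ := (Filter.eventually_atTop).mp
    (dirichlet_Ioc.eventually (eventually_abs_sub_lt (π/2) one_pos))
  set C := |M| + π/2 + 1 with hC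
  have hCpos : 0 < C := by positivity
  refine ⟨C, hCpos, ?_⟩
  have base : ∀ y : ℝ, |∫ x in Ioc (0:ℝ) y, Real.sin x / x| ≤ C := by
    intro y
    rcases le_or_gt y 0 with hy | hy
    · rw [Set.Ioc_eq_empty (by simpa using hy)]
      simp [hCpos.le]
    rcases le_or_gt y M with hyM | hyM
    · have : |∫ x in Ioc (0:ℝ) y, Real.sin x / x| ≤ ∫ x in Ioc (0:ℝ) y, 1 := by
        rw [← Real.norm_eq_abs]
        apply MeasureTheory.norm_integral_le_of_norm_le (integrable_const 1)
        filter_upwards [ae_restrict_mem measurableSet_Ioc] with x hx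
        rw [Real.norm_eq_abs, abs_div]
        rw [div_le_one (abs_pos.mpr hx.1.ne')]
        exact Real.abs_sin_le_abs
      apply this.trans
      rw [MeasureTheory.setIntegral_const, smul_eq_mul, mul_one, Real.volume_real_Ioc_of_le (by linarith : (0:ℝ) ≤ y), sub_zero]
      calc y ≤ M := hyM
        _ ≤ |M| := le_abs_self M
        _ ≤ C := by rw [hC]; nlinarith [pi_pos]
    · have h := hM y (le_of_lt hyM)
      have : |∫ x in Ioc (0:ℝ) y, Real.sin x / x| ≤ π/2 + 1 := by
        have := abs_sub_abs_le_abs_sub (∫ x in Ioc (0:ℝ) y, Real.sin x / x) (π/2)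
        have hpi : |π/2| = π/2 := abs_of_pos (by positivity)
        nlinarith [abs_nonneg M]
      apply this.trans
      rw [hC]; nlinarith [abs_nonneg M]
  intro c T hc
  rcases eq_or_lt_of_le hc with rfl | hc
  · simp [hCpos.le]
  rcases le_or_gt T 0 with hT | hT
  · rw [Set.Ioc_eq_empty (by simpa using hT)]
    simp [hCpos.le]
  · rw [subst_eq hc hT.le]
    exact base (c*T)

lemma sinc_abs_le (y x : ℝ) : |Real.sin (y*x)/x| ≤ |y| := by
  rcases eq_or_ne x 0 with rfl | hx
  · simp
  · rw [abs_div, div_le_iff₀ (abs_pos.mpr hx)]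
    calc |Real.sin (y*x)| ≤ |y*x| := Real.abs_sin_le_abs
      _ = |y| * |x| := abs_mul y x

lemma prod_sinc_abs_le (n : ℕ) (a : ℕ → ℝ) (x : ℝ) :
    |∏ k ∈ Finset.Icc 1 n, (Real.sin (a k * x)/x)| ≤ ∏ k ∈ Finset.Icc 1 n, |a k| := by
  rw [Finset.abs_prod]
  exact Finset.prod_le_prod (fun k _ => abs_nonneg _) (fun k _ => sinc_abs_le (a k) x)

lemma meas_sinc (y : ℝ) : Measurable (fun x : ℝ => Real.sin (y * x)/x) :=
  (Real.measurable_sin.comp (measurable_const.mul measurable_id)).div measurable_id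

lemma meas_prod_sinc (n : ℕ) (a : ℕ → ℝ) :
    Measurable (fun x : ℝ => ∏ k ∈ Finset.Icc 1 n, (Real.sin (a k * x)/x)) :=
  Finset.measurable_prod _ (fun k _ => meas_sinc (a k))

lemma J_integrableOn (n : ℕ) (a : ℕ → ℝ) (c T : ℝ) :
    IntegrableOn (fun x => Real.sin (c*x)/x * ∏ k ∈ Finset.Icc 1 n, (Real.sin (a k * x)/x))
      (Ioc (0:ℝ) T) := by
  apply MeasureTheory.Integrable.mono' (integrable_const (|c| * ∏ k ∈ Finset.Icc 1 n, |a k|))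
    ((meas_sinc c).mul (meas_prod_sinc n a)).aestronglyMeasurable
  filter_upwards [] with x
  rw [Real.norm_eq_abs, Pi.mul_apply, abs_mul]
  exact mul_le_mul (sinc_abs_le c x) (prod_sinc_abs_le n a x) (abs_nonneg _) (abs_nonneg _)

lemma trig_id (c t x : ℝ) :
    Real.sin (c*x) * Real.cos (t*x) / x
      = (Real.sin ((c+t)*x)/x + Real.sin ((c-t)*x)/x)/2 := by
  have h1 : (c+t)*x = c*x + t*x := by ring
  have h2 : (c-t)*x = c*x - t*x := by ring
  rw [h1, h2, Real.sin_add, Real.sin_sub]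
  rcases eq_or_ne x 0 with rfl | hx
  · simp
  · field_simp
    ring

lemma cos_integral (A x : ℝ) (hx : x ≠ 0) :
    ∫ t in (0:ℝ)..A, Real.cos (t*x) = Real.sin (A*x)/x := by
  rw [intervalIntegral.integral_comp_mul_right Real.cos hx]
  simp [Real.sin_zero, smul_eq_mul, div_eq_inv_mul]

lemma borwein_main (C : ℝ) (hC : 0 < C)
    (hSi : ∀ c T : ℝ, 0 ≤ c → |∫ x in Ioc (0:ℝ) T, Real.sin (c*x)/x| ≤ C) :
    ∀ (n : ℕ) (a : ℕ → ℝ), (∀ k, 1 ≤ k → k ≤ n → 0 < a k) →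
      (∀ c T : ℝ, 0 ≤ c → (∑ k ∈ Finset.Icc 1 n, a k) ≤ c →
        |∫ x in Ioc (0:ℝ) T, Real.sin (c*x)/x * ∏ k ∈ Finset.Icc 1 n, (Real.sin (a k * x)/x)|
          ≤ C * ∏ k ∈ Finset.Icc 1 n, a k)
      ∧ (∀ c : ℝ, 0 < c → (∑ k ∈ Finset.Icc 1 n, a k) ≤ c →
        Tendsto (fun T => ∫ x in Ioc (0:ℝ) T,
            Real.sin (c*x)/x * ∏ k ∈ Finset.Icc 1 n, (Real.sin (a k * x)/x))
          atTop (nhds (π/2 * ∏ k ∈ Finset.Icc 1 n, a k))) := by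
  intro n
  induction n with
  | zero =>
    intro a _
    have he : Finset.Icc 1 0 = (∅ : Finset ℕ) := by decide
    simp only [he, Finset.prod_empty, Finset.sum_empty, mul_one]
    constructor
    · intro c T hc _
      exact hSi c T hc
    · intro c hc _
      exact dirichlet_scaled hc
  | succ n ih =>
    intro a ha
    have ha' : ∀ k, 1 ≤ k → k ≤ n → 0 < a k := fun k h1 h2 => ha k h1 (by omega)
    obtain ⟨IHb, IHt⟩ := ih a ha'
    have hA : 0 < a (n+1) := ha (n+1) (by omega) le_rfl
    have hnm : (n+1) ∉ Finset.Icc 1 n := by simp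
    have hicc : Finset.Icc 1 (n+1) = insert (n+1) (Finset.Icc 1 n) := by
      ext k; simp only [Finset.mem_Icc, Finset.mem_insert]; omega
    have hSn : (0:ℝ) ≤ ∑ k ∈ Finset.Icc 1 n, a k :=
      Finset.sum_nonneg fun k hk => (ha' k (Finset.mem_Icc.mp hk).1 (Finset.mem_Icc.mp hk).2).le
    have hprodpos : (0:ℝ) < ∏ k ∈ Finset.Icc 1 n, a k :=
      Finset.prod_pos fun k hk => ha' k (Finset.mem_Icc.mp hk).1 (Finset.mem_Icc.mp hk).2
    have hsum1 : ∑ k ∈ Finset.Icc 1 (n+1), a k = a (n+1) + ∑ k ∈ Finset.Icc 1 n, a k := by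
      rw [hicc, Finset.sum_insert hnm]
    have hprod1 : ∏ k ∈ Finset.Icc 1 (n+1), a k = a (n+1) * ∏ k ∈ Finset.Icc 1 n, a k := by
      rw [hicc, Finset.prod_insert hnm]
    -- the inner rewriting: for every t, c, T:
    have inner : ∀ (c t T : ℝ),
        (∫ x in Ioc (0:ℝ) T, Real.sin (c*x) * Real.cos (t*x) / x
            * ∏ k ∈ Finset.Icc 1 n, (Real.sin (a k * x)/x))
        = ((∫ x in Ioc (0:ℝ) T, Real.sin ((c+t)*x)/x * ∏ k ∈ Finset.Icc 1 n, (Real.sin (a k * x)/x))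
          + (∫ x in Ioc (0:ℝ) T, Real.sin ((c-t)*x)/x * ∏ k ∈ Finset.Icc 1 n, (Real.sin (a k * x)/x)))/2 := by
      intro c t T
      have hptw : ∀ x : ℝ, Real.sin (c*x) * Real.cos (t*x) / x
            * ∏ k ∈ Finset.Icc 1 n, (Real.sin (a k * x)/x)
          = (Real.sin ((c+t)*x)/x * ∏ k ∈ Finset.Icc 1 n, (Real.sin (a k * x)/x)
            + Real.sin ((c-t)*x)/x * ∏ k ∈ Finset.Icc 1 n, (Real.sin (a k * x)/x))/2 := by
        intro x
        rw [trig_id c t x]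
        ring
      simp_rw [hptw]
      rw [MeasureTheory.integral_div, MeasureTheory.integral_add
        (J_integrableOn n a (c+t) T) (J_integrableOn n a (c-t) T)]
    -- integrability on the product
    have hΨint : ∀ (c T : ℝ), Integrable
        (fun p : ℝ × ℝ => Real.sin (c*p.1) * Real.cos (p.2*p.1) / p.1
          * ∏ k ∈ Finset.Icc 1 n, (Real.sin (a k * p.1)/p.1))
        ((volume.restrict (Ioc (0:ℝ) T)).prod (volume.restrict (Ioc (0:ℝ) (a (n+1))))) := by
      intro c T
      apply MeasureTheory.Integrable.mono'
        (integrable_const (|c| * ∏ k ∈ Finset.Icc 1 n, |a k|))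
      · apply Measurable.aestronglyMeasurable
        apply Measurable.mul
        · exact ((Real.measurable_sin.comp (measurable_const.mul measurable_fst)).mul
            (Real.measurable_cos.comp (measurable_snd.mul measurable_fst))).div measurable_fst
        · exact (meas_prod_sinc n a).comp measurable_fst
      · filter_upwards [] with p
        rw [Real.norm_eq_abs, abs_mul]
        apply mul_le_mul _ (prod_sinc_abs_le n a p.1) (abs_nonneg _) (abs_nonneg _)
        have : Real.sin (c*p.1) * Real.cos (p.2*p.1) / p.1
            = (Real.sin (c*p.1)/p.1) * Real.cos (p.2*p.1) := by ring
        rw [this, abs_mul]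
        calc |Real.sin (c*p.1)/p.1| * |Real.cos (p.2*p.1)|
            ≤ |c| * 1 := mul_le_mul (sinc_abs_le c p.1) (Real.abs_cos_le_one _)
              (abs_nonneg _) (abs_nonneg _)
          _ = |c| := mul_one _
    -- the key Fubini identity
    have key : ∀ (c T : ℝ), 0 ≤ T →
        (∫ x in Ioc (0:ℝ) T, Real.sin (c*x)/x
            * ∏ k ∈ Finset.Icc 1 (n+1), (Real.sin (a k * x)/x))
        = ∫ t in Ioc (0:ℝ) (a (n+1)),
            ((∫ x in Ioc (0:ℝ) T, Real.sin ((c+t)*x)/x * ∏ k ∈ Finset.Icc 1 n, (Real.sin (a k * x)/x))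
            + (∫ x in Ioc (0:ℝ) T, Real.sin ((c-t)*x)/x * ∏ k ∈ Finset.Icc 1 n, (Real.sin (a k * x)/x)))/2 := by
      intro c T hT
      have step1 : (∫ x in Ioc (0:ℝ) T, Real.sin (c*x)/x
            * ∏ k ∈ Finset.Icc 1 (n+1), (Real.sin (a k * x)/x))
          = ∫ x in Ioc (0:ℝ) T, ∫ t in Ioc (0:ℝ) (a (n+1)),
              Real.sin (c*x) * Real.cos (t*x) / x
                * ∏ k ∈ Finset.Icc 1 n, (Real.sin (a k * x)/x) := by
        apply MeasureTheory.setIntegral_congr_fun measurableSet_Ioc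
        intro x hx
        have hx0 : x ≠ 0 := ne_of_gt hx.1
        have hcos : (∫ t in Ioc (0:ℝ) (a (n+1)), Real.cos (t*x)) = Real.sin (a (n+1) * x)/x := by
          rw [← intervalIntegral.integral_of_le hA.le, cos_integral _ _ hx0]
        have hptw : ∀ t : ℝ, Real.sin (c*x) * Real.cos (t*x) / x
              * ∏ k ∈ Finset.Icc 1 n, (Real.sin (a k * x)/x)
            = (Real.sin (c*x)/x * ∏ k ∈ Finset.Icc 1 n, (Real.sin (a k * x)/x)) * Real.cos (t*x) := by
          intro t; ring
        simp only [hptw]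
        rw [MeasureTheory.integral_const_mul, hcos, hicc, Finset.prod_insert hnm]
        ring
      rw [step1, MeasureTheory.integral_integral_swap (hΨint c T)]
      apply MeasureTheory.integral_congr_ae
      filter_upwards [] with t
      exact inner c t T
    constructor
    · -- the bound
      intro c T hc hsc
      rcases lt_or_ge T 0 with hT | hT
      · rw [Set.Ioc_eq_empty (by simpa using hT.le), Measure.restrict_empty,
          MeasureTheory.integral_zero_measure]
        have : (0:ℝ) < C * ∏ k ∈ Finset.Icc 1 (n+1), a k := by
          rw [hprod1]; positivity
        simpa using this.le
      · rw [key c T hT]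
        have hbd : ∀ t ∈ Ioc (0:ℝ) (a (n+1)),
            ‖((∫ x in Ioc (0:ℝ) T, Real.sin ((c+t)*x)/x * ∏ k ∈ Finset.Icc 1 n, (Real.sin (a k * x)/x))
            + (∫ x in Ioc (0:ℝ) T, Real.sin ((c-t)*x)/x * ∏ k ∈ Finset.Icc 1 n, (Real.sin (a k * x)/x)))/2‖
            ≤ C * ∏ k ∈ Finset.Icc 1 n, a k := by
          intro t ht
          have h1 := IHb (c+t) T (by linarith [ht.1, hsum1 ▸ hsc]) (by
            have := hsum1 ▸ hsc; linarith [ht.1, hA])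
          have h2 := IHb (c-t) T (by
            have := hsum1 ▸ hsc; linarith [ht.2]) (by
            have := hsum1 ▸ hsc; linarith [ht.2])
          rw [Real.norm_eq_abs, abs_div]
          rw [abs_of_pos (by norm_num : (0:ℝ) < 2)]
          have := abs_add_le (∫ x in Ioc (0:ℝ) T, Real.sin ((c+t)*x)/x * ∏ k ∈ Finset.Icc 1 n, (Real.sin (a k * x)/x))
            (∫ x in Ioc (0:ℝ) T, Real.sin ((c-t)*x)/x * ∏ k ∈ Finset.Icc 1 n, (Real.sin (a k * x)/x))
          linarith
        calc |∫ t in Ioc (0:ℝ) (a (n+1)), ((∫ x in Ioc (0:ℝ) T, Real.sin ((c+t)*x)/x * ∏ k ∈ Finset.Icc 1 n, (Real.sin (a k * x)/x))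
            + (∫ x in Ioc (0:ℝ) T, Real.sin ((c-t)*x)/x * ∏ k ∈ Finset.Icc 1 n, (Real.sin (a k * x)/x)))/2|
            ≤ ∫ t in Ioc (0:ℝ) (a (n+1)), C * ∏ k ∈ Finset.Icc 1 n, a k := by
              rw [← Real.norm_eq_abs]
              apply MeasureTheory.norm_integral_le_of_norm_le (integrable_const _)
              filter_upwards [ae_restrict_mem measurableSet_Ioc] with t ht
              exact hbd t ht
          _ = C * ∏ k ∈ Finset.Icc 1 (n+1), a k := by
              rw [MeasureTheory.setIntegral_const, smul_eq_mul, Real.volume_real_Ioc_of_le (by linarith : (0:ℝ) ≤ a (n+1)), hprod1]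
              ring
    · -- the limit
      intro c hc hsc
      have hc' : ∑ k ∈ Finset.Icc 1 n, a k + a (n+1) ≤ c := by rw [hsum1] at hsc; linarith
      -- dominated convergence
      have hlim : Tendsto (fun T : ℝ => ∫ t in Ioc (0:ℝ) (a (n+1)),
          ((∫ x in Ioc (0:ℝ) T, Real.sin ((c+t)*x)/x * ∏ k ∈ Finset.Icc 1 n, (Real.sin (a k * x)/x))
          + (∫ x in Ioc (0:ℝ) T, Real.sin ((c-t)*x)/x * ∏ k ∈ Finset.Icc 1 n, (Real.sin (a k * x)/x)))/2)
          atTop (nhds (∫ t in Ioc (0:ℝ) (a (n+1)), π/2 * ∏ k ∈ Finset.Icc 1 n, a k)) := by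
        apply MeasureTheory.tendsto_integral_filter_of_dominated_convergence
          (fun _ => C * ∏ k ∈ Finset.Icc 1 n, a k)
        · filter_upwards [] with T
          apply AEStronglyMeasurable.congr
            (((hΨint c T).swap.integral_prod_left).aestronglyMeasurable)
          filter_upwards [] with t
          exact inner c t T
        · filter_upwards [] with T
          filter_upwards [ae_restrict_mem measurableSet_Ioc] with t ht
          have h1 := IHb (c+t) T (by linarith [ht.1]) (by linarith [ht.1, hA])
          have h2 := IHb (c-t) T (by linarith [ht.2, hSn]) (by linarith [ht.2])
          rw [Real.norm_eq_abs, abs_div, abs_of_pos (by norm_num : (0:ℝ) < 2)]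
          have := abs_add_le (∫ x in Ioc (0:ℝ) T, Real.sin ((c+t)*x)/x * ∏ k ∈ Finset.Icc 1 n, (Real.sin (a k * x)/x))
            (∫ x in Ioc (0:ℝ) T, Real.sin ((c-t)*x)/x * ∏ k ∈ Finset.Icc 1 n, (Real.sin (a k * x)/x))
          linarith
        · exact integrable_const _
        · have hae : ∀ᵐ t ∂(volume.restrict (Ioc (0:ℝ) (a (n+1)))), t ≠ c := by
            apply ae_restrict_of_ae
            have : {t : ℝ | ¬ t ≠ c} = {c} := by ext t; simp
            rw [MeasureTheory.ae_iff, this]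
            exact Real.volume_singleton
          filter_upwards [ae_restrict_mem measurableSet_Ioc, hae] with t ht htc
          have hct : 0 < c + t := by linarith [ht.1]
          have hct2 : 0 < c - t := by
            rcases lt_or_eq_of_le (by linarith [ht.2] : (0:ℝ) ≤ c - t) with h | h
            · exact h
            · exact absurd (by linarith : t = c) htc
          have l1 := IHt (c+t) hct (by linarith [ht.1, hA])
          have l2 := IHt (c-t) hct2 (by linarith [ht.2])
          have := (l1.add l2).div_const 2
          have harith : (π/2 * ∏ k ∈ Finset.Icc 1 n, a k + π/2 * ∏ k ∈ Finset.Icc 1 n, a k)/2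
              = π/2 * ∏ k ∈ Finset.Icc 1 n, a k := by ring
          rwa [harith] at this
      have hval : (∫ t in Ioc (0:ℝ) (a (n+1)), π/2 * ∏ k ∈ Finset.Icc 1 n, a k)
          = π/2 * ∏ k ∈ Finset.Icc 1 (n+1), a k := by
        rw [MeasureTheory.setIntegral_const, smul_eq_mul, Real.volume_real_Ioc_of_le (by linarith : (0:ℝ) ≤ a (n+1)), hprod1]
        ring
      rw [hval] at hlim
      apply hlim.congr'
      filter_upwards [eventually_ge_atTop 0] with T hT
      exact (key c T hT).symm

theorem sinc_prod_integral (n : ℕ) (hn : 1 ≤ n) (a : ℕ → ℝ)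
    (hpos : ∀ k ≤ n, 0 < a k)
    (hdom : a 0 ≥ ∑ k ∈ Finset.Icc 1 n, a k) :
    Tendsto (fun T : ℝ => ∫ x in (0:ℝ)..T, ∏ k ∈ Finset.range (n+1), Real.sin (a k * x) / x)
      atTop (nhds (π / 2 * ∏ k ∈ Finset.Icc 1 n, a k)) := by
  obtain ⟨C, hC, hSi⟩ := Si_bound
  have ha' : ∀ k, 1 ≤ k → k ≤ n → 0 < a k := fun k _ h2 => hpos k h2
  have hmain := (borwein_main C hC hSi n a ha').2 (a 0) (hpos 0 (Nat.zero_le n)) hdom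
  apply hmain.congr'
  filter_upwards [eventually_ge_atTop 0] with T hT
  rw [intervalIntegral.integral_of_le hT]
  apply MeasureTheory.setIntegral_congr_fun measurableSet_Ioc
  intro x _
  have hr : Finset.range (n+1) = insert 0 (Finset.Icc 1 n) := by
    ext k; simp only [Finset.mem_range, Finset.mem_insert, Finset.mem_Icc]; omega
  simp only [hr]
  rw [Finset.prod_insert (by simp)]
end

section
/- For n ≥ 2, the partial sum ∑ₖ₌₁ⁿ 1/(2k−1) is never an integer. -/
open Finset

theorem odd_harmonic_not_integer (n : ℕ) (hn : 2 ≤ n) :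
    ¬ ∃ z : ℤ, ∑ k ∈ Finset.Icc 1 n, (1 : ℚ) / (2 * k - 1) = z := by
  haveI : Fact (Nat.Prime 3) := ⟨by norm_num⟩
  -- rewrite the sum over `range n` with positive terms
  set F : ℕ → ℚ := fun i => ((2 * i + 1 : ℕ) : ℚ)⁻¹ with hF
  have hFpos : ∀ i, 0 < F i := by
    intro i
    simp only [hF]
    positivity
  have hsum : ∑ k ∈ Finset.Icc 1 n, (1 : ℚ) / (2 * k - 1) = ∑ i ∈ Finset.range n, F i := by
    rw [← Finset.Ico_add_one_right_eq_Icc, Finset.sum_Ico_eq_sum_range]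
    refine Finset.sum_congr rfl fun i _ => ?_
    simp only [hF]
    push_cast
    rw [one_div]
    ring_nf
  set k := Nat.log 3 (2 * n - 1) with hk
  have h3 : 3 ≤ 2 * n - 1 := by omega
  have hk1 : 1 ≤ k := Nat.log_pos (by norm_num) h3
  have hpow_le : 3 ^ k ≤ 2 * n - 1 := Nat.pow_log_le_self 3 (by omega)
  have hlt_pow : 2 * n - 1 < 3 ^ (k + 1) := Nat.lt_pow_succ_log_self (by norm_num) _
  -- the special index
  set j := (3 ^ k - 1) / 2 with hj
  have h3kodd : Odd (3 ^ k) := Odd.pow (by decide)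
  have hjval : 2 * j + 1 = 3 ^ k := by
    obtain ⟨m, hm⟩ := h3kodd
    omega
  have hjn : j ∈ Finset.range n := by
    rw [Finset.mem_range]
    omega
  -- valuation of each term
  have hvalF : ∀ i, padicValRat 3 (F i) = -(padicValNat 3 (2 * i + 1) : ℤ) := by
    intro i
    rw [hF]
    rw [padicValRat.inv, padicValRat.of_nat]
  have hvalFj : padicValRat 3 (F j) = -(k : ℤ) := by
    rw [hvalF, hjval, padicValNat.prime_pow]
  -- all other valuations are strictly bigger
  have hvother : ∀ i ∈ (Finset.range n).erase j, padicValRat 3 (F j) < padicValRat 3 (F i) := by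
    intro i hi
    rw [Finset.mem_erase, Finset.mem_range] at hi
    obtain ⟨hij, hin⟩ := hi
    rw [hvalFj, hvalF, neg_lt_neg_iff]
    have hle : padicValNat 3 (2 * i + 1) ≤ k := by
      calc padicValNat 3 (2 * i + 1) ≤ Nat.log 3 (2 * i + 1) := padicValNat_le_nat_log _
        _ ≤ k := Nat.log_mono_right (by omega)
    rcases lt_or_eq_of_le hle with h | h
    · exact_mod_cast h
    · exfalso
      have hdvd : 3 ^ k ∣ 2 * i + 1 := by
        rw [← h]
        exact pow_padicValNat_dvd
      obtain ⟨t, ht⟩ := hdvd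
      have htodd : Odd t := by
        rcases Nat.even_or_odd t with he | ho
        · exfalso
          obtain ⟨s, hs⟩ := he
          subst hs
          have : 2 * i + 1 = 2 * (3 ^ k * s) := by rw [ht]; ring
          omega
        · exact ho
      have ht1 : t ≠ 1 := by
        intro h1
        subst h1
        rw [mul_one] at ht
        apply hij
        have : 2 * i + 1 = 2 * j + 1 := by rw [ht, ← hjval]
        omega
      have ht3 : 3 ≤ t := by
        obtain ⟨s, hs⟩ := htodd
        omega
      have hbig : 3 ^ (k + 1) ≤ 2 * i + 1 := by
        rw [pow_succ, ht]
        exact Nat.mul_le_mul_left _ ht3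
      omega
  -- the valuation of the sum is -k
  have hne : ((Finset.range n).erase j).Nonempty := by
    rw [← Finset.card_pos, Finset.card_erase_of_mem hjn, Finset.card_range]
    omega
  have hrest_pos : 0 < ∑ i ∈ (Finset.range n).erase j, F i :=
    Finset.sum_pos (fun i _ => hFpos i) hne
  have hvrest : padicValRat 3 (F j) < padicValRat 3 (∑ i ∈ (Finset.range n).erase j, F i) :=
    padicValRat.lt_sum_of_lt hne hvother hFpos
  have hsplit : ∑ i ∈ Finset.range n, F i = F j + ∑ i ∈ (Finset.range n).erase j, F i :=
    (Finset.add_sum_erase _ F hjn).symm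
  have hsum_ne : ∑ i ∈ Finset.range n, F i ≠ 0 := by
    rw [hsplit]
    positivity
  have hval_sum : padicValRat 3 (∑ i ∈ Finset.range n, F i) = -(k : ℤ) := by
    rw [hsplit, padicValRat.add_eq_of_lt (hsplit ▸ hsum_ne) (hFpos j).ne'
      hrest_pos.ne' hvrest, hvalFj]
  rintro ⟨z, hz⟩
  rw [hsum] at hz
  have hz0 : z ≠ 0 := by
    rintro rfl
    exact hsum_ne (by simpa using hz)
  have : padicValRat 3 (z : ℚ) = -(k : ℤ) := by rw [← hz]; exact hval_sum
  rw [padicValRat.of_int] at this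
  omega
end

section
/- For every integer n ≥ 1, n! > (n/e)ⁿ·√(2πn)·exp(1/(12n + 3/(4n+2))). -/
open Real

open Filter Topology Stirling in
private noncomputable def myF (k : ℕ) : ℝ := 1 / (12 * (k : ℝ) + 3 / (4 * (k : ℝ) + 2))

private lemma myF_eq (k : ℕ) : myF k = (4 * (k : ℝ) + 2) / (3 * (4 * (k : ℝ) + 1) ^ 2) := by
  have h : (0:ℝ) < 4 * (k:ℝ) + 2 := by positivity
  rw [myF, div_eq_div_iff]
  · field_simp
    ring
  · have : 0 < 3 / (4 * (k:ℝ) + 2) := by positivity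
    have : (0:ℝ) ≤ 12 * (k:ℝ) := by positivity
    linarith
  · positivity

private lemma key_poly (z : ℝ) (hz : 0 ≤ z) :
    (4 * (z + 1) + 2) / (3 * (4 * (z + 1) + 1) ^ 2)
      - (4 * (z + 2) + 2) / (3 * (4 * (z + 2) + 1) ^ 2)
      < 1 / 3 * (1 / (2 * z + 3)) ^ 2 + 1 / 5 * ((1 / (2 * z + 3)) ^ 2) ^ 2 := by
  have h1 : (0:ℝ) < 2 * z + 3 := by linarith
  have h2 : (0:ℝ) < 4 * (z + 1) + 1 := by linarith
  have h3 : (0:ℝ) < 4 * (z + 2) + 1 := by linarith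
  rw [← sub_pos]
  have key : 1 / 3 * (1 / (2 * z + 3)) ^ 2 + 1 / 5 * ((1 / (2 * z + 3)) ^ 2) ^ 2
      - ((4 * (z + 1) + 2) / (3 * (4 * (z + 1) + 1) ^ 2)
        - (4 * (z + 2) + 2) / (3 * (4 * (z + 2) + 1) ^ 2))
      = (448 * z ^ 4 + 2496 * z ^ 3 + 5268 * z ^ 2 + 4860 * z + 1620)
        / (15 * (2 * z + 3) ^ 4 * (4 * (z + 1) + 1) ^ 2 * (4 * (z + 2) + 1) ^ 2) := by
    field_simp
    ring
  rw [key]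
  positivity

open Filter Topology Stirling in
private lemma step_gt (m : ℕ) :
    myF (m + 1) - myF (m + 2) <
      Real.log (stirlingSeq (m + 1)) - Real.log (stirlingSeq (m + 2)) := by
  have hs := Stirling.log_stirlingSeq_diff_hasSum m
  have hpart := sum_le_hasSum (Finset.range 2)
    (fun k _ => by positivity) hs
  refine lt_of_lt_of_le ?_ hpart
  rw [Finset.sum_range_succ, Finset.sum_range_one]
  rw [myF_eq, myF_eq]
  push_cast
  have := key_poly (m : ℝ) (Nat.cast_nonneg m)
  convert this using 2
  · rfl
  all_goals push_cast; ring

open Filter Topology Stirling in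
private lemma myF_tendsto : Tendsto myF atTop (𝓝 0) := by
  have h : Tendsto (fun k : ℕ => 12 * (k : ℝ) + 3 / (4 * (k : ℝ) + 2)) atTop atTop := by
    apply tendsto_atTop_mono (f := fun k : ℕ => 12 * (k : ℝ))
    · intro k
      have : 0 < 3 / (4 * (k:ℝ) + 2) := by positivity
      linarith
    · exact (tendsto_natCast_atTop_atTop).const_mul_atTop (by norm_num)
  exact h.inv_tendsto_atTop.congr fun k => by simp [myF, one_div]

open Filter Topology Stirling in
private lemma g_ge (m : ℕ) :
    Real.log (√π) < Real.log (stirlingSeq (m + 1)) - myF (m + 1) := by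
  set g : ℕ → ℝ := fun k => Real.log (stirlingSeq (k + 1)) - myF (k + 1) with hg
  have hanti : Antitone g := by
    apply antitone_nat_of_succ_le
    intro k
    have := step_gt k
    simp only [hg]
    have hk2 : k + 1 + 1 = k + 2 := rfl
    rw [hk2]
    linarith
  have ht1 : Tendsto (fun k : ℕ => Real.log (stirlingSeq (k + 1))) atTop (𝓝 (Real.log (√π))) := by
    apply Tendsto.comp (Real.continuousAt_log (by positivity)).tendsto
    exact Stirling.tendsto_stirlingSeq_sqrt_pi.comp (tendsto_add_atTop_nat 1)
  have ht2 : Tendsto (fun k : ℕ => myF (k + 1)) atTop (𝓝 0) :=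
    myF_tendsto.comp (tendsto_add_atTop_nat 1)
  have htend : Tendsto g atTop (𝓝 (Real.log (√π))) := by
    have := ht1.sub ht2
    rwa [sub_zero] at this
  have h1 : Real.log (√π) ≤ g (m + 1) := hanti.le_of_tendsto htend (m + 1)
  have h2 : g (m + 1) < g m := by
    have := step_gt m
    simp only [hg]
    have hk2 : m + 1 + 1 = m + 2 := rfl
    rw [hk2]
    linarith
  calc Real.log (√π) ≤ g (m + 1) := h1
    _ < g m := h2

open Filter Topology Stirling in
theorem stirling_lower_bound (n : ℕ) (hn : 1 ≤ n) :
    (Nat.factorial n : ℝ) >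
      ((n : ℝ) / Real.exp 1) ^ n * Real.sqrt (2 * π * n) *
        Real.exp (1 / (12 * n + 3 / (4 * n + 2))) := by
  obtain ⟨m, rfl⟩ : ∃ m, n = m + 1 := ⟨n - 1, (Nat.succ_pred_eq_of_pos hn).symm⟩
  have hpos : 0 < stirlingSeq (m + 1) := Stirling.stirlingSeq'_pos m
  have hlog : Real.log (√π) + myF (m + 1) < Real.log (stirlingSeq (m + 1)) := by
    have := g_ge m; linarith
  have hπ : (0:ℝ) < √π := by positivity
  have hexp : √π * Real.exp (myF (m + 1)) < stirlingSeq (m + 1) := by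
    have := Real.exp_lt_exp.mpr hlog
    rwa [Real.exp_add, Real.exp_log hπ, Real.exp_log hpos] at this
  have hden : (0:ℝ) < √(2 * ↑(m + 1)) * ((↑(m + 1) : ℝ) / Real.exp 1) ^ (m + 1) := by
    have : (0:ℝ) < (m + 1 : ℕ) := by positivity
    positivity
  have hfact : (Nat.factorial (m + 1) : ℝ)
      = stirlingSeq (m + 1) * (√(2 * ↑(m + 1)) * ((↑(m + 1) : ℝ) / Real.exp 1) ^ (m + 1)) := by
    rw [stirlingSeq, div_mul_cancel₀ _ hden.ne']
  have hsqrt : √(2 * π * ↑(m + 1)) = √π * √(2 * ↑(m + 1)) := by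
    rw [← Real.sqrt_mul (by positivity)]
    ring_nf
  have hmy : myF (m + 1) = 1 / (12 * (↑(m + 1) : ℝ) + 3 / (4 * (↑(m + 1) : ℝ) + 2)) := rfl
  rw [hfact, hsqrt]
  calc ((↑(m + 1) : ℝ) / Real.exp 1) ^ (m + 1) * (√π * √(2 * ↑(m + 1))) *
        Real.exp (1 / (12 * ↑(m + 1) + 3 / (4 * ↑(m + 1) + 2)))
      = (√π * Real.exp (myF (m + 1))) * (√(2 * ↑(m + 1)) * ((↑(m + 1) : ℝ) / Real.exp 1) ^ (m + 1)) := by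
        rw [hmy]; push_cast; ring
    _ < stirlingSeq (m + 1) * (√(2 * ↑(m + 1)) * ((↑(m + 1) : ℝ) / Real.exp 1) ^ (m + 1)) := by
        exact mul_lt_mul_of_pos_right hexp hden
end

section
/- For every integer n ≥ 1, n! < (n/e)ⁿ·√(2πn)·exp(1/(12n)). -/
open Real

open Stirling Filter Topology in
lemma stirling_diff_lt (m : ℕ) :
    Real.log (stirlingSeq (m + 1)) - Real.log (stirlingSeq (m + 2)) <
      1 / (12 * ((m : ℝ) + 1)) - 1 / (12 * ((m : ℝ) + 2)) := by
  have htpos : (0 : ℝ) < (1 : ℝ) / (2 * ((m : ℝ) + 1) + 1) := by positivity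
  have ht2 : ((1 : ℝ) / (2 * ((m : ℝ) + 1) + 1)) ^ 2 < 1 := by
    rw [sq_lt_one_iff_abs_lt_one, abs_of_pos htpos, div_lt_one (by positivity)]
    nlinarith [Nat.cast_nonneg (α := ℝ) m]
  have hf := Stirling.log_stirlingSeq_diff_hasSum m
  have hg : HasSum (fun k : ℕ => (1 : ℝ) / 3 * (((1:ℝ) / (2 * ↑(m + 1) + 1)) ^ 2) ^ (k + 1))
      ((1 : ℝ) / 3 * (((1:ℝ) / (2 * ↑(m + 1) + 1)) ^ 2 /
        (1 - ((1:ℝ) / (2 * ↑(m + 1) + 1)) ^ 2))) := by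
    have h0 : (0 : ℝ) ≤ ((1:ℝ) / (2 * ↑(m + 1) + 1)) ^ 2 := sq_nonneg _
    have := (hasSum_geometric_of_lt_one h0 (by push_cast; exact ht2)).mul_left
      (((1:ℝ) / (2 * ↑(m + 1) + 1)) ^ 2)
    simp_rw [← _root_.pow_succ'] at this
    exact this.mul_left ((1:ℝ)/3)
  have hd := hg.sub hf
  have hle : ∀ j : ℕ, j ≠ 1 → (0 : ℝ) ≤
      (1 : ℝ) / 3 * (((1:ℝ) / (2 * ↑(m + 1) + 1)) ^ 2) ^ (j + 1) -
      (1 : ℝ) / (2 * ↑(j + 1) + 1) * (((1:ℝ) / (2 * ↑(m + 1) + 1)) ^ 2) ^ (j + 1) := by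
    intro j _
    have h1 : (0 : ℝ) ≤ (((1:ℝ) / (2 * ↑(m + 1) + 1)) ^ 2) ^ (j + 1) := by positivity
    have h2 : (1 : ℝ) / (2 * ↑(j + 1) + 1) ≤ 1 / 3 := by
      apply div_le_div_of_nonneg_left one_pos.le (by norm_num)
      push_cast; linarith [Nat.cast_nonneg (α := ℝ) j]
    nlinarith
  have hle2 := le_hasSum hd 1 hle
  have hkey : (0 : ℝ) < (1 : ℝ) / 3 * (((1:ℝ) / (2 * ((m:ℕ) + 1 : ℕ) + 1)) ^ 2) ^ (1 + 1) -
      (1 : ℝ) / (2 * ((1:ℕ) + 1 : ℕ) + 1) * (((1:ℝ) / (2 * ((m:ℕ) + 1 : ℕ) + 1)) ^ 2) ^ (1 + 1)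
      := by
    have hterm : (0 : ℝ) < (((1:ℝ) / (2 * ((m:ℕ) + 1 : ℕ) + 1)) ^ 2) ^ (1 + 1) := by positivity
    push_cast at hterm ⊢
    nlinarith
  have hlt : (0 : ℝ) <
      (1 : ℝ) / 3 * (((1:ℝ) / (2 * ↑(m + 1) + 1)) ^ 2 /
        (1 - ((1:ℝ) / (2 * ↑(m + 1) + 1)) ^ 2)) -
      (Real.log (stirlingSeq (m + 1)) - Real.log (stirlingSeq (m + 2))) :=
    lt_of_lt_of_le hkey hle2
  have hval : (1 : ℝ) / 3 * (((1:ℝ) / (2 * ((m:ℝ) + 1) + 1)) ^ 2 /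
        (1 - ((1:ℝ) / (2 * ((m:ℝ) + 1) + 1)) ^ 2)) =
      1 / (12 * ((m : ℝ) + 1)) - 1 / (12 * ((m : ℝ) + 2)) := by
    have h1 : (2 * ((m : ℝ) + 1) + 1) ≠ 0 := by positivity
    have h2 : (1 : ℝ) - ((1:ℝ) / (2 * ((m : ℝ) + 1) + 1)) ^ 2 ≠ 0 := by
      intro h; linarith [ht2]
    have hm1 : ((m : ℝ) + 1) ≠ 0 := by positivity
    have hm2 : ((m : ℝ) + 2) ≠ 0 := by positivity
    have h3 : (24 + (m:ℝ) * 36 + (m:ℝ) ^ 2 * 12) ≠ 0 := by positivity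
    field_simp
    ring_nf
    field_simp [h3]
    ring
  push_cast at hlt
  linarith [hval ▸ hlt]

open Stirling Filter Topology in
lemma stirling_lt (m : ℕ) :
    stirlingSeq (m + 1) < Real.sqrt π * Real.exp (1 / (12 * ((m : ℝ) + 1))) := by
  set g : ℕ → ℝ := fun k => Real.log (stirlingSeq (k + 1)) - 1 / (12 * ((k : ℝ) + 1)) with hgdef
  have hmono : StrictMono g := by
    apply strictMono_nat_of_lt_succ
    intro k
    have h := stirling_diff_lt k
    show Real.log (stirlingSeq (k + 1)) - 1 / (12 * ((k : ℝ) + 1)) <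
      Real.log (stirlingSeq (k + 1 + 1)) - 1 / (12 * (((k + 1 : ℕ) : ℝ) + 1))
    have e2 : (k + 1 + 1) = (k + 2) := rfl
    rw [e2]
    push_cast
    have h2 : ((k : ℝ) + 1 + 1) = (k : ℝ) + 2 := by ring
    rw [h2]
    linarith
  have hsqpos : (0:ℝ) < Real.sqrt π := Real.sqrt_pos.mpr Real.pi_pos
  have htend : Tendsto g atTop (𝓝 (Real.log (Real.sqrt π))) := by
    have h1 : Tendsto (fun k : ℕ => Real.log (stirlingSeq (k + 1))) atTop
        (𝓝 (Real.log (Real.sqrt π))) :=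
      ((Real.continuousAt_log hsqpos.ne').tendsto).comp
        (Stirling.tendsto_stirlingSeq_sqrt_pi.comp (tendsto_add_atTop_nat 1))
    have haux : Tendsto (fun k : ℕ => 12 * ((k : ℝ) + 1)) atTop atTop := by
      apply Filter.Tendsto.const_mul_atTop (show (0:ℝ) < 12 by norm_num)
      exact tendsto_atTop_add_const_right _ 1 tendsto_natCast_atTop_atTop
    have h2 := haux.inv_tendsto_atTop
    have h3 := h1.sub h2
    rw [sub_zero] at h3
    refine h3.congr (fun k => ?_)
    simp [hgdef, one_div]
  have hlt : g m < Real.log (Real.sqrt π) := by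
    have h1 : g m < g (m + 1) := hmono (Nat.lt_succ_self m)
    have h2 : g (m + 1) ≤ Real.log (Real.sqrt π) := hmono.monotone.ge_of_tendsto htend (m + 1)
    linarith
  have hpos := Stirling.stirlingSeq'_pos m
  rw [hgdef] at hlt
  simp only [sub_lt_iff_lt_add] at hlt
  calc stirlingSeq (m + 1) = Real.exp (Real.log (stirlingSeq (m + 1))) :=
        (Real.exp_log hpos).symm
    _ < Real.exp (Real.log (Real.sqrt π) + 1 / (12 * ((m : ℝ) + 1))) := by
        apply Real.exp_lt_exp.mpr; linarith
    _ = Real.sqrt π * Real.exp (1 / (12 * ((m : ℝ) + 1))) := by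
        rw [Real.exp_add, Real.exp_log hsqpos]

theorem stirling_upper_bound (n : ℕ) (hn : 1 ≤ n) :
    (Nat.factorial n : ℝ) <
      ((n : ℝ) / Real.exp 1) ^ n * Real.sqrt (2 * π * n) * Real.exp (1 / (12 * n)) := by
  obtain ⟨m, rfl⟩ := Nat.exists_eq_add_of_le hn
  rw [add_comm] at *
  have h := stirling_lt m
  have hfac : (Nat.factorial (m + 1) : ℝ) =
      Stirling.stirlingSeq (m + 1) * (Real.sqrt (2 * ((m + 1 : ℕ) : ℝ)) * (((m + 1 : ℕ) : ℝ) /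
        Real.exp 1) ^ (m + 1)) := by
    rw [Stirling.stirlingSeq]
    have hpos : (0:ℝ) < Real.sqrt (2 * ((m + 1 : ℕ) : ℝ)) * (((m + 1 : ℕ) : ℝ) /
        Real.exp 1) ^ (m + 1) := by
      have : (0:ℝ) < ((m + 1 : ℕ) : ℝ) := by positivity
      positivity
    field_simp
  have hsq : Real.sqrt (2 * π * ((m + 1 : ℕ) : ℝ)) =
      Real.sqrt π * Real.sqrt (2 * ((m + 1 : ℕ) : ℝ)) := by
    rw [show (2 * π * ((m + 1 : ℕ) : ℝ)) = π * (2 * ((m + 1 : ℕ) : ℝ)) by ring,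
      Real.sqrt_mul Real.pi_pos.le]
  have hB : (0:ℝ) < Real.sqrt (2 * ((m + 1 : ℕ) : ℝ)) * (((m + 1 : ℕ) : ℝ) /
      Real.exp 1) ^ (m + 1) := by
    have : (0:ℝ) < ((m + 1 : ℕ) : ℝ) := by positivity
    positivity
  rw [hfac, hsq]
  have hh : (((m + 1 : ℕ) : ℝ) + 0) = ((m : ℝ) + 1) := by push_cast; ring
  have hcast : (1 : ℝ) / (12 * ((m + 1 : ℕ) : ℝ)) = 1 / (12 * ((m : ℝ) + 1)) := by push_cast; ring
  calc Stirling.stirlingSeq (m + 1) * (Real.sqrt (2 * ((m + 1 : ℕ) : ℝ)) * (((m + 1 : ℕ) : ℝ) /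
        Real.exp 1) ^ (m + 1))
      < (Real.sqrt π * Real.exp (1 / (12 * ((m : ℝ) + 1)))) *
        (Real.sqrt (2 * ((m + 1 : ℕ) : ℝ)) * (((m + 1 : ℕ) : ℝ) / Real.exp 1) ^ (m + 1)) := by
        exact mul_lt_mul_of_pos_right h hB
    _ = (((m + 1 : ℕ) : ℝ) / Real.exp 1) ^ (m + 1) * (Real.sqrt π *
        Real.sqrt (2 * ((m + 1 : ℕ) : ℝ))) * Real.exp (1 / (12 * ((m + 1 : ℕ) : ℝ))) := by
        rw [hcast]; ring
end

section
/- For every integer n ≥ 1, exp(1/(12n) − 1/(12n + 3/(4n+2))) ≤ 1 + 1/(192n³). -/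
open Real

theorem stirling_bounds_ratio (n : ℕ) (hn : 1 ≤ n) :
    Real.exp (1 / (12 * (n : ℝ)) - 1 / (12 * n + 3 / (4 * n + 2))) ≤
      1 + 1 / (192 * (n : ℝ) ^ 3) := by
  set N : ℝ := (n : ℝ) with hNdef
  have hN : (1 : ℝ) ≤ N := by rw [hNdef]; exact_mod_cast hn
  have h12 : (12 : ℝ) * N > 0 := by linarith
  have h42 : (4 : ℝ) * N + 2 > 0 := by linarith
  have hinner : (12 : ℝ) * N * (4 * N + 2) + 3 > 0 := by nlinarith
  have harg : 1 / (12 * N) - 1 / (12 * N + 3 / (4 * N + 2))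
      = 1 / (12 * N * (4 * N + 1) ^ 2) := by
    have h1 : (12 : ℝ) * N + 3 / (4 * N + 2) = (12 * N * (4 * N + 2) + 3) / (4 * N + 2) := by
      field_simp
    rw [h1, one_div_div]
    rw [div_sub_div _ _ (ne_of_gt h12) (ne_of_gt hinner)]
    rw [div_eq_div_iff (by positivity) (by positivity)]
    ring
  rw [harg]
  set x := 1 / (12 * N * (4 * N + 1) ^ 2) with hxdef
  have hxpos : 0 < x := by positivity
  have hxsmall : x ≤ 1 / 300 := by
    rw [hxdef, div_le_div_iff₀ (by positivity) (by norm_num)]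
    nlinarith [sq_nonneg N, sq_nonneg (N - 1)]
  have h1x : (0 : ℝ) < 1 - x := by linarith
  have hexp : Real.exp x ≤ 1 / (1 - x) := by
    have h := Real.add_one_le_exp (-x)
    rw [le_div_iff₀ h1x]
    calc Real.exp x * (1 - x) ≤ Real.exp x * Real.exp (-x) := by
          apply mul_le_mul_of_nonneg_left (by linarith) (Real.exp_pos _).le
      _ = 1 := by rw [← Real.exp_add]; simp
  refine hexp.trans ?_
  rw [div_le_iff₀ h1x, ← sub_nonneg, hxdef]
  have hd : (0:ℝ) < 12 * N * (4 * N + 1) ^ 2 := by positivity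
  have he : (0:ℝ) < 192 * N ^ 3 := by positivity
  have key : (1 + 1 / (192 * N ^ 3)) * (1 - 1 / (12 * N * (4 * N + 1) ^ 2)) - 1
      = (12 * N * (4 * N + 1) ^ 2 - (192 * N ^ 3) - 1)
        / ((192 * N ^ 3) * (12 * N * (4 * N + 1) ^ 2)) := by
    field_simp
    ring
  rw [key]
  apply div_nonneg _ (by positivity)
  nlinarith [sq_nonneg N]
end

section
/- Let N(a) denote the least positive integer n such that ∑ₖ₌₁ⁿ 1/(2k−1) > a. Then N(a+1)/N(a) → e² as a → ∞ (a ranging over positive reals). -/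
open Real Filter Finset

noncomputable def Hsum (n : ℕ) : ℝ := ∑ k ∈ Finset.Icc 1 n, (1 : ℝ) / (2 * k - 1)

noncomputable def fseq (n : ℕ) : ℝ := Hsum n - (1/2) * Real.log (2 * n + 1)

lemma Hsum_succ (n : ℕ) : Hsum (n+1) = Hsum n + 1 / (2 * ((n:ℝ)+1) - 1) := by
  rw [Hsum, Hsum, Finset.sum_Icc_succ_top (Nat.le_add_left 1 n)]
  push_cast
  ring

lemma Hsum_mono : Monotone Hsum := by
  intro m n h
  apply Finset.sum_le_sum_of_subset_of_nonneg (Finset.Icc_subset_Icc_right h)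
  intro k hk _
  have hk1 : (1:ℝ) ≤ (k:ℝ) := by exact_mod_cast (Finset.mem_Icc.mp hk).1
  have : (0:ℝ) < 2*k-1 := by linarith
  positivity

lemma log_sub_log_le {x : ℝ} (hx : 0 < x) : Real.log (x+2) - Real.log x ≤ 2/x := by
  have h := Real.log_le_sub_one_of_pos (show 0 < (x+2)/x by positivity)
  rw [Real.log_div (by linarith) (ne_of_gt hx)] at h
  have h2 : (x+2)/x - 1 = 2/x := by field_simp; ring
  linarith

lemma le_log_sub_log {x : ℝ} (hx : 0 < x) : 2/(x+2) ≤ Real.log (x+2) - Real.log x := by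
  have h := Real.log_le_sub_one_of_pos (show 0 < x/(x+2) by positivity)
  rw [Real.log_div (ne_of_gt hx) (by linarith)] at h
  have h2 : x/(x+2) - 1 = -(2/(x+2)) := by field_simp; ring
  linarith

lemma fseq_mono : Monotone fseq := by
  apply monotone_nat_of_le_succ
  intro n
  have hx : (0:ℝ) < 2*(n:ℝ)+1 := by positivity
  have h := log_sub_log_le hx
  have hc : (2*(n:ℝ)+1) + 2 = 2*((n:ℝ)+1)+1 := by ring
  rw [hc] at h
  have hstep := Hsum_succ n
  have he : (2*((n:ℝ)+1)-1) = 2*(n:ℝ)+1 := by ring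
  rw [he] at hstep
  have h3 : 2/(2*(n:ℝ)+1) = 2 * (1/(2*(n:ℝ)+1)) := by ring
  simp only [fseq]
  push_cast
  linarith [h, hstep, h3.le]

lemma Hsum_one : Hsum 1 = 1 := by
  simp [Hsum]; norm_num

lemma Hsum_le (n : ℕ) (hn : 1 ≤ n) : Hsum n ≤ 1 + (1/2) * Real.log (2*(n:ℝ) - 1) := by
  induction n, hn using Nat.le_induction with
  | base =>
    rw [Hsum_one]
    norm_num
  | succ n hn ih =>
    have hx : (0:ℝ) < 2*(n:ℝ)-1 := by
      have : (1:ℝ) ≤ (n:ℝ) := by exact_mod_cast hn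
      linarith
    have h := le_log_sub_log hx
    have hc : (2*(n:ℝ)-1) + 2 = 2*((n:ℝ)+1)-1 := by ring
    rw [hc] at h
    have hstep := Hsum_succ n
    have h3 : 2/(2*((n:ℝ)+1)-1) = 2*(1/(2*((n:ℝ)+1)-1)) := by ring
    push_cast
    linarith

lemma fseq_le_one (n : ℕ) : fseq n ≤ 1 := by
  rcases Nat.eq_zero_or_pos n with h0 | h1
  · subst h0; simp [fseq, Hsum]
  · have h := Hsum_le n h1
    have hn1 : (1:ℝ) ≤ (n:ℝ) := by exact_mod_cast h1
    have hlog : Real.log (2*(n:ℝ)-1) ≤ Real.log (2*(n:ℝ)+1) :=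
      Real.log_le_log (by linarith) (by linarith)
    simp only [fseq]
    linarith

noncomputable def Lconst : ℝ := ⨆ n, fseq n

lemma fseq_bdd : BddAbove (Set.range fseq) := ⟨1, by rintro x ⟨n, rfl⟩; exact fseq_le_one n⟩

lemma fseq_le_L (n : ℕ) : fseq n ≤ Lconst := le_ciSup fseq_bdd n

lemma fseq_tendsto : Tendsto fseq atTop (nhds Lconst) :=
  tendsto_atTop_ciSup fseq_mono fseq_bdd

lemma Hsum_eq (n : ℕ) : Hsum n = fseq n + (1/2) * Real.log (2*(n:ℝ)+1) := by
  simp [fseq]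

theorem least_n_ratio_tendsto_exp_two
    (N : ℝ → ℕ)
    (hN : ∀ a : ℝ, 0 < a →
      IsLeast {n : ℕ | 0 < n ∧ a < ∑ k ∈ Finset.Icc 1 n, (1 : ℝ) / (2 * k - 1)} (N a)) :
    Tendsto (fun a : ℝ => (N (a + 1) : ℝ) / (N a : ℝ)) atTop (nhds (Real.exp 2)) := by
  have hmem : ∀ a : ℝ, 0 < a → 0 < N a ∧ a < Hsum (N a) := fun a ha => (hN a ha).1
  have hlb : ∀ a : ℝ, ∀ n : ℕ, 0 < a → Hsum n ≤ a → n < N a := by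
    intro a n ha h
    by_contra hc
    push_neg at hc
    exact absurd ((hmem a ha).2.trans_le (Hsum_mono hc)) (not_lt.mpr h)
  have hNtop : Tendsto N atTop atTop := by
    rw [tendsto_atTop]
    intro b
    filter_upwards [eventually_ge_atTop (max 1 (Hsum b))] with a ha
    have ha1 : (0:ℝ) < a := lt_of_lt_of_le one_pos ((le_max_left _ _).trans ha)
    exact (hlb a b ha1 ((le_max_right _ _).trans ha)).le
  have hNsub : Tendsto (fun a => N a - 1) atTop atTop := by
    rw [tendsto_atTop]
    intro b
    filter_upwards [tendsto_atTop.1 hNtop (b+1)] with a ha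
    omega
  have hmin : ∀ a : ℝ, 0 < a → 2 ≤ N a → Hsum (N a - 1) ≤ a := by
    intro a ha h2
    by_contra hc
    push_neg at hc
    have := (hN a ha).2 ⟨by omega, hc⟩
    omega
  set c := Real.exp (-(2*Lconst)) with hc
  have hu : Tendsto (fun a => (2 * (N a : ℝ) + 1) * Real.exp (-(2*a))) atTop (nhds c) := by
    have hupper : Tendsto (fun a => Real.exp (-(2 * fseq (N a - 1))) + 2 * Real.exp (-(2*a)))
        atTop (nhds (c + 2 * 0)) := by
      have hcont : Continuous (fun x : ℝ => Real.exp (-(2*x))) := by continuity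
      have h1 : Tendsto (fun a : ℝ => Real.exp (-(2 * fseq (N a - 1)))) atTop (nhds c) :=
        (hcont.tendsto Lconst).comp (fseq_tendsto.comp hNsub)
      have h2 : Tendsto (fun a : ℝ => Real.exp (-(2*a))) atTop (nhds 0) :=
        Real.tendsto_exp_neg_atTop_nhds_zero.comp
          (tendsto_id.const_mul_atTop (by norm_num : (0:ℝ) < 2))
      exact h1.add (h2.const_mul 2)
    rw [mul_zero, add_zero] at hupper
    apply tendsto_of_tendsto_of_tendsto_of_le_of_le' tendsto_const_nhds hupper
    · -- lower bound eventually
      filter_upwards [eventually_ge_atTop (1:ℝ)] with a ha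
      have ha0 : (0:ℝ) < a := lt_of_lt_of_le one_pos ha
      have h1 : a < fseq (N a) + (1/2) * Real.log (2*((N a:ℕ):ℝ)+1) := by
        rw [← Hsum_eq]; exact (hmem a ha0).2
      have h2 : a < Lconst + (1/2) * Real.log (2*((N a:ℕ):ℝ)+1) :=
        h1.trans_le (by linarith [fseq_le_L (N a)])
      have hpos : (0:ℝ) < 2*((N a:ℕ):ℝ)+1 := by positivity
      have h3 : Real.exp (2*a - 2*Lconst) ≤ 2*((N a:ℕ):ℝ)+1 := by
        rw [← Real.exp_log hpos]
        exact Real.exp_le_exp.mpr (by linarith)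
      calc c = Real.exp (2*a - 2*Lconst) * Real.exp (-(2*a)) := by
              rw [hc, ← Real.exp_add]; congr 1; ring
        _ ≤ (2*((N a:ℕ):ℝ)+1) * Real.exp (-(2*a)) :=
              mul_le_mul_of_nonneg_right h3 (Real.exp_pos _).le
    · -- upper bound eventually
      filter_upwards [eventually_ge_atTop (1:ℝ), tendsto_atTop.1 hNtop 2] with a ha hN2
      have ha0 : (0:ℝ) < a := lt_of_lt_of_le one_pos ha
      have hcast : ((N a - 1 : ℕ) : ℝ) = (N a : ℝ) - 1 := by
        have : 1 ≤ N a := by omega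
        push_cast [this]; ring
      have hH := hmin a ha0 hN2
      rw [Hsum_eq, hcast] at hH
      have hNR : (2:ℝ) ≤ (N a : ℝ) := by exact_mod_cast hN2
      have hpos : (0:ℝ) < 2*((N a:ℝ)-1)+1 := by linarith
      have h3 : 2*((N a:ℝ)-1)+1 ≤ Real.exp (2*a - 2 * fseq (N a - 1)) := by
        rw [← Real.exp_log hpos]
        exact Real.exp_le_exp.mpr (by linarith)
      have h4 : (2*((N a:ℝ)-1)+1) * Real.exp (-(2*a)) ≤ Real.exp (-(2 * fseq (N a - 1))) := by
        calc (2*((N a:ℝ)-1)+1) * Real.exp (-(2*a))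
            ≤ Real.exp (2*a - 2 * fseq (N a - 1)) * Real.exp (-(2*a)) :=
              mul_le_mul_of_nonneg_right h3 (Real.exp_pos _).le
          _ = Real.exp (-(2 * fseq (N a - 1))) := by rw [← Real.exp_add]; ring_nf
      have heq : (2 * (N a : ℝ) + 1) * Real.exp (-(2*a))
          = (2*((N a:ℝ)-1)+1) * Real.exp (-(2*a)) + 2 * Real.exp (-(2*a)) := by ring
      rw [heq]
      linarith
  -- v a = N a * exp(-2a)
  have h0 : Tendsto (fun a : ℝ => Real.exp (-(2*a))) atTop (nhds 0) :=
    Real.tendsto_exp_neg_atTop_nhds_zero.comp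
      (tendsto_id.const_mul_atTop (by norm_num : (0:ℝ) < 2))
  have hv : Tendsto (fun a : ℝ => (N a : ℝ) * Real.exp (-(2*a))) atTop (nhds ((c - 0)/2)) := by
    have heq : ∀ a : ℝ, (N a : ℝ) * Real.exp (-(2*a))
        = ((2 * (N a : ℝ) + 1) * Real.exp (-(2*a)) - Real.exp (-(2*a)))/2 := by
      intro a; ring
    simp only [heq]
    exact (hu.sub h0).div_const 2
  rw [sub_zero] at hv
  have hc2 : c/2 ≠ 0 := by positivity
  have hv1 : Tendsto (fun a : ℝ => ((N (a+1) : ℝ)) * Real.exp (-(2*(a+1)))) atTop (nhds (c/2)) :=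
    hv.comp (tendsto_atTop_add_const_right atTop 1 tendsto_id)
  have key : Tendsto (fun a : ℝ =>
      ((N (a+1) : ℝ) * Real.exp (-(2*(a+1)))) / ((N a : ℝ) * Real.exp (-(2*a))) * Real.exp 2)
      atTop (nhds (Real.exp 2)) := by
    have := (hv1.div hv hc2).mul_const (Real.exp 2)
    rwa [div_self hc2, one_mul] at this
  apply key.congr'
  filter_upwards [eventually_ge_atTop (1:ℝ)] with a ha
  have ha0 : (0:ℝ) < a := lt_of_lt_of_le one_pos ha
  have hNa : (0:ℝ) < (N a : ℝ) := by exact_mod_cast (hmem a ha0).1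
  have he : Real.exp (-(2*(a+1))) = Real.exp (-(2*a)) * Real.exp (-2) := by
    rw [← Real.exp_add]; ring_nf
  have hee : Real.exp (-2) * Real.exp 2 = 1 := by
    rw [← Real.exp_add]; norm_num
  rw [he]
  calc ((N (a+1) : ℝ)) * (Real.exp (-(2*a)) * Real.exp (-2)) / ((N a : ℝ) * Real.exp (-(2*a))) * Real.exp 2
      = ((N (a+1) : ℝ) / (N a : ℝ)) * (Real.exp (-(2*a)) / Real.exp (-(2*a))) * (Real.exp (-2) * Real.exp 2) := by
        ring
    _ = (N (a+1) : ℝ) / (N a : ℝ) := by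
        rw [div_self (ne_of_gt (Real.exp_pos _)), hee, mul_one, mul_one]
end
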